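/- Let f be the standard normal density. For all real x₁, x₂: (f(x₁)−f(x₂))² + (1/4)[(x₁f(x₁)−x₂f(x₂))² − (√(x₁²+4)·f(x₁) + √(x₂²+4)·f(x₂))²] < 0. -/
import Mathlib


open Real MeasureTheory Set

noncomputable def stdNormalPdf (x : ℝ) : ℝ := (Real.sqrt (2 * Real.pi))⁻¹ * Real.exp (-x ^ 2 / 2)

noncomputable def gaussQ (x : ℝ) : ℝ := ∫ t in Set.Ici x, stdNormalPdf t

noncomputable def gaussPhi (x : ℝ) : ℝ := ∫ t in Set.Iic x, stdNormalPdf t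

lemma stdNormalPdf_pos (x : ℝ) : 0 < stdNormalPdf x := by
  unfold stdNormalPdf
  positivity

theorem stmt8 (x₁ x₂ : ℝ) :
    (stdNormalPdf x₁ - stdNormalPdf x₂) ^ 2
      + (1 / 4) * ((x₁ * stdNormalPdf x₁ - x₂ * stdNormalPdf x₂) ^ 2
        - (Real.sqrt (x₁ ^ 2 + 4) * stdNormalPdf x₁
            + Real.sqrt (x₂ ^ 2 + 4) * stdNormalPdf x₂) ^ 2) < 0 := by
  set a := stdNormalPdf x₁ with ha
  set b := stdNormalPdf x₂ with hb
  have hap : 0 < a := stdNormalPdf_pos x₁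
  have hbp : 0 < b := stdNormalPdf_pos x₂
  set s₁ := Real.sqrt (x₁ ^ 2 + 4) with hs1
  set s₂ := Real.sqrt (x₂ ^ 2 + 4) with hs2
  have h1 : s₁ ^ 2 = x₁ ^ 2 + 4 := Real.sq_sqrt (by positivity)
  have h2 : s₂ ^ 2 = x₂ ^ 2 + 4 := Real.sq_sqrt (by positivity)
  have h1n : 0 ≤ s₁ := Real.sqrt_nonneg _
  have h2n : 0 ≤ s₂ := Real.sqrt_nonneg _
  have hkey : 0 < x₁ * x₂ + s₁ * s₂ := by
    nlinarith [sq_nonneg (s₁ * s₂ + x₁ * x₂), sq_nonneg (x₁ - x₂), sq_nonneg (x₁ + x₂),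
      mul_nonneg h1n h2n, sq_nonneg (s₁ - s₂)]
  have hid : (a - b) ^ 2 + (1 / 4) * ((x₁ * a - x₂ * b) ^ 2 - (s₁ * a + s₂ * b) ^ 2)
      = -(a * b) * (2 + (1 / 2) * (x₁ * x₂ + s₁ * s₂)) := by
    linear_combination (-(a ^ 2) / 4) * h1 + (-(b ^ 2) / 4) * h2
  rw [hid]
  have : 0 < a * b := mul_pos hap hbp
  nlinarith
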